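/- arXiv:1406.6725 — 2 statements merged into one kernel-verified Lean document; each statement's English description precedes it below -/
import Mathlib

section
/- In the real space c₀ of sequences (indexed by integers i ≥ 1) converging to 0 with the supremum norm, for each integer n ≥ 1 define a_n^+ = {x ∈ c₀ : |x_i| ≤ (1/2)(1 + 1/i) for all i ≥ 1, and x_n = (1/2)(1 + 1/n)} and a_n^- = {x ∈ c₀ : |x_i| ≤ (1/2)(1 + 1/i) for all i ≥ 1, and x_n = −(1/2)(1 + 1/n)}. Then each a_n^± is a nonempty closed convex subset of the closed unit ball of c₀, and for every ε with 0 ≤ ε ≤ 1/2 the ε-enlargements (a_n^+)^ε and (a_n^-)^ε are disjoint; in particular a_n^+ ∩ a_n^- = ∅ for every n. -/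
open Metric ZeroAtInfty

noncomputable def enl {X : Type*} [NormedAddCommGroup X] (A : Set X) (ε : ℝ) : Set X :=
  {x : X | infDist x A ≤ ε}

noncomputable def aSgn (s : ℝ) (n : ℕ+) : Set C₀(ℕ+, ℝ) :=
  {x | (∀ i : ℕ+, |x i| ≤ (1 / 2) * (1 + 1 / (i : ℝ))) ∧
    x n = s * ((1 / 2) * (1 + 1 / (n : ℝ)))}

noncomputable def singleC0 (n : ℕ+) (c : ℝ) : C₀(ℕ+, ℝ) where
  toFun i := if i = n then c else 0
  continuous_toFun := continuous_of_discreteTopology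
  zero_at_infty' := by
    rw [Filter.cocompact_eq_cofinite]
    apply Filter.Tendsto.congr' (f₁ := fun _ => (0:ℝ))
    · filter_upwards [Set.Finite.eventually_cofinite_notMem (Set.finite_singleton n)] with i hi
      simp [Set.mem_singleton_iff] at hi
      simp [hi]
    · exact tendsto_const_nhds

lemma singleC0_apply (n i : ℕ+) (c : ℝ) : singleC0 n c i = if i = n then c else 0 := rfl

lemma eval_dist_le (i : ℕ+) (x y : C₀(ℕ+, ℝ)) : dist (x i) (y i) ≤ dist x y := by
  rw [← ZeroAtInftyContinuousMap.dist_toBCF_eq_dist (f := x) (g := y)]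
  exact BoundedContinuousFunction.dist_coe_le_dist (f := x.toBCF) (g := y.toBCF) i

lemma eval_continuous (i : ℕ+) : Continuous fun x : C₀(ℕ+, ℝ) => x i := by
  have h : LipschitzWith 1 (fun x : C₀(ℕ+, ℝ) => x i) :=
    LipschitzWith.mk_one (f := fun x : C₀(ℕ+, ℝ) => x i) fun x y => eval_dist_le i x y
  exact h.continuous

lemma le_infDist' {X : Type*} [MetricSpace X] {s : Set X} (hs : s.Nonempty) {x : X} {c : ℝ}
    (h : ∀ y ∈ s, c ≤ dist x y) : c ≤ infDist x s := by
  by_contra hlt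
  push_neg at hlt
  obtain ⟨y, hy, hd⟩ := (infDist_lt_iff hs).mp hlt
  exact absurd (h y hy) (not_le.mpr hd)

lemma bound_pos (i : ℕ+) : (0:ℝ) < (1 / 2) * (1 + 1 / (i : ℝ)) := by
  have : (0:ℝ) < (i:ℝ) := by exact_mod_cast i.pos
  positivity

lemma aSgn_props (s : ℝ) (hs : |s| = 1) (n : ℕ+) :
    (aSgn s n).Nonempty ∧ IsClosed (aSgn s n) ∧ Convex ℝ (aSgn s n) ∧
      aSgn s n ⊆ closedBall 0 1 := by
  have hipos : ∀ i : ℕ+, (0:ℝ) < (i:ℝ) := fun i => by exact_mod_cast i.pos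
  refine ⟨⟨singleC0 n (s * ((1 / 2) * (1 + 1 / (n : ℝ)))), ?_, by simp [singleC0_apply]⟩,
    ?_, ?_, ?_⟩
  · intro i
    rw [singleC0_apply]
    by_cases h : i = n
    · subst h
      rw [if_pos rfl, abs_mul, hs, one_mul, abs_of_pos (bound_pos i)]
    · rw [if_neg h, abs_zero]
      exact le_of_lt (bound_pos i)
  · have h1 : IsClosed {x : C₀(ℕ+, ℝ) | ∀ i : ℕ+, |x i| ≤ (1 / 2) * (1 + 1 / (i : ℝ))} := by
      rw [Set.setOf_forall]
      exact isClosed_iInter fun i =>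
        isClosed_le ((eval_continuous i).abs) continuous_const
    have h2 : IsClosed {x : C₀(ℕ+, ℝ) | x n = s * ((1 / 2) * (1 + 1 / (n : ℝ)))} :=
      isClosed_eq (eval_continuous n) continuous_const
    exact h1.inter h2
  · rintro x ⟨hx1, hx2⟩ y ⟨hy1, hy2⟩ a b ha hb hab
    constructor
    · intro i
      have : (a • x + b • y) i = a * x i + b * y i := by
        simp
      rw [this]
      calc |a * x i + b * y i| ≤ |a * x i| + |b * y i| := abs_add_le _ _
        _ = a * |x i| + b * |y i| := by
            rw [abs_mul, abs_mul, abs_of_nonneg ha, abs_of_nonneg hb]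
        _ ≤ a * ((1 / 2) * (1 + 1 / (i : ℝ))) + b * ((1 / 2) * (1 + 1 / (i : ℝ))) := by
            gcongr <;> [exact hx1 i; exact hy1 i]
        _ = (1 / 2) * (1 + 1 / (i : ℝ)) := by rw [← add_mul, hab, one_mul]
    · have : (a • x + b • y) n = a * x n + b * y n := by simp
      rw [this, hx2, hy2, ← add_mul, hab, one_mul]
  · intro x ⟨hx1, _⟩
    rw [mem_closedBall, dist_zero_right, ← ZeroAtInftyContinuousMap.norm_toBCF_eq_norm]
    apply BoundedContinuousFunction.norm_le (by norm_num) |>.mpr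
    intro i
    calc ‖x i‖ ≤ (1 / 2) * (1 + 1 / (i : ℝ)) := hx1 i
      _ ≤ (1 / 2) * (1 + 1) := by
          gcongr
          rw [div_le_one (hipos i)]
          exact_mod_cast i.one_le
      _ = 1 := by norm_num

/-- In `c₀`, the sets `aₙ⁺` and `aₙ⁻` are nonempty closed convex subsets of the closed unit
ball, and for every `0 ≤ ε ≤ 1/2` their `ε`-enlargements are disjoint; in particular
`aₙ⁺ ∩ aₙ⁻ = ∅`. -/
theorem c0_example_disjoint_enlargements :
    (∀ n : ℕ+, (aSgn 1 n).Nonempty ∧ IsClosed (aSgn 1 n) ∧ Convex ℝ (aSgn 1 n) ∧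
      aSgn 1 n ⊆ closedBall 0 1) ∧
    (∀ n : ℕ+, (aSgn (-1) n).Nonempty ∧ IsClosed (aSgn (-1) n) ∧ Convex ℝ (aSgn (-1) n) ∧
      aSgn (-1) n ⊆ closedBall 0 1) ∧
    (∀ ε : ℝ, 0 ≤ ε → ε ≤ 1 / 2 →
      ∀ n : ℕ+, enl (aSgn 1 n) ε ∩ enl (aSgn (-1) n) ε = ∅) ∧
    ∀ n : ℕ+, aSgn 1 n ∩ aSgn (-1) n = ∅ := by
  have key : ∀ n : ℕ+, ∀ x ∈ aSgn 1 n, ∀ y ∈ aSgn (-1) n,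
      1 + 1 / (n : ℝ) ≤ dist x y := by
    intro n x hx y hy
    have := eval_dist_le n x y
    rw [Real.dist_eq, hx.2, hy.2] at this
    have hc : (1:ℝ) * ((1 / 2) * (1 + 1 / (n : ℝ))) - (-1) * ((1 / 2) * (1 + 1 / (n : ℝ)))
        = 1 + 1 / (n : ℝ) := by ring
    rw [hc] at this
    exact le_trans (le_abs_self _) this
  refine ⟨fun n => aSgn_props 1 (by norm_num) n, fun n => aSgn_props (-1) (by norm_num) n,
    ?_, ?_⟩
  · intro ε hε0 hε n
    ext z
    simp only [Set.mem_inter_iff, Set.mem_empty_iff_false, iff_false]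
    rintro ⟨h1, h2⟩
    have hne1 : (aSgn 1 n).Nonempty := (aSgn_props 1 (by norm_num) n).1
    have hne2 : (aSgn (-1) n).Nonempty := (aSgn_props (-1) (by norm_num) n).1
    have step1 : 1 + 1 / (n : ℝ) - infDist z (aSgn (-1) n) ≤ infDist z (aSgn 1 n) := by
      apply le_infDist' hne1
      intro x hx
      rw [sub_le_iff_le_add]
      have : 1 + 1 / (n : ℝ) - dist z x ≤ infDist z (aSgn (-1) n) := by
        apply le_infDist' hne2
        intro y hy
        have := key n x hx y hy
        have htri : dist x y ≤ dist z x + dist z y := dist_triangle_left x y z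
        linarith
      linarith
    have hn : (0:ℝ) < 1 / (n : ℝ) := by
      have : (0:ℝ) < (n:ℝ) := by exact_mod_cast n.pos
      positivity
    have := h1; have := h2
    simp only [enl, Set.mem_setOf_eq] at h1 h2
    linarith
  · intro n
    ext x
    simp only [Set.mem_inter_iff, Set.mem_empty_iff_false, iff_false]
    rintro ⟨hx, hy⟩
    have h1 := hx.2
    have h2 := hy.2
    rw [h1] at h2
    have := bound_pos n
    nlinarith
end

section
/- In the real space c₀ of sequences (indexed by integers i ≥ 1) converging to 0 with the supremum norm, for each integer n ≥ 1 define a_n^+ = {x ∈ c₀ : |x_i| ≤ (1/2)(1 + 1/i) for all i ≥ 1, and x_n = (1/2)(1 + 1/n)} and a_n^- = {x ∈ c₀ : |x_i| ≤ (1/2)(1 + 1/i) for all i ≥ 1, and x_n = −(1/2)(1 + 1/n)}. Then for every choice of signs z : {n∈ℕ : n ≥ 1} → {+1, −1}, the sequence x defined by x_i = z(i)/(2i) belongs to c₀ and satisfies dist(x, a_n^{z(n)}) ≤ 1/2 for every n ≥ 1; hence ⋂_{n≥1} (a_n^{z(n)})^{1/2} ≠ ∅ (here a_n^{+1} means a_n^+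 and a_n^{−1} means a_n^-). -/
open Metric ZeroAtInfty Filter

/-- Build an element of `C₀(ℕ+, ℝ)` from a function tending to zero along cofinite. -/
noncomputable def mkC0 (f : ℕ+ → ℝ) (h : Tendsto f cofinite (nhds 0)) : C₀(ℕ+, ℝ) where
  toFun := f
  continuous_toFun := continuous_of_discreteTopology
  zero_at_infty' := by rwa [cocompact_eq_cofinite]

/-- For any choice of signs `z(n) ∈ {+1, -1}`, the sequence `x_i = z(i)/(2i)` belongs to `c₀`
and satisfies `dist(x, aₙ^{z(n)}) ≤ 1/2` for every `n`; hence `⋂ₙ (aₙ^{z(n)})^{1/2} ≠ ∅`. -/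
theorem c0_example_choice_of_signs_meets_half_enlargements
    (z : ℕ+ → ℝ) (hz : ∀ n, z n = 1 ∨ z n = -1) :
    (∃ x : C₀(ℕ+, ℝ), (∀ i : ℕ+, x i = z i / (2 * (i : ℝ))) ∧
      ∀ n : ℕ+, infDist x (aSgn (z n) n) ≤ 1 / 2) ∧
    (⋂ n : ℕ+, enl (aSgn (z n) n) (1 / 2)).Nonempty := by
  have habs : ∀ i, |z i| = 1 := by
    intro i; rcases hz i with h | h <;> simp [h]
  have hipos : ∀ i : ℕ+, (0 : ℝ) < (i : ℝ) := fun i => by exact_mod_cast i.pos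
  -- the base sequence
  set f : ℕ+ → ℝ := fun i => z i / (2 * (i : ℝ)) with hf
  have hfabs : ∀ i, |f i| = 1 / (2 * (i : ℝ)) := by
    intro i
    rw [hf, abs_div, habs, abs_of_pos (by positivity)]
  have htend : Tendsto f cofinite (nhds 0) := by
    rw [Metric.tendsto_nhds]
    intro ε hε
    rw [eventually_cofinite]
    have : {i : ℕ+ | ¬ dist (f i) 0 < ε} ⊆
        (fun i : ℕ+ => (i : ℕ)) ⁻¹' Set.Iic ⌈1 / (2 * ε)⌉₊ := by
      intro i hi
      simp only [Set.mem_setOf_eq, not_lt, dist_zero_right, Real.norm_eq_abs, hfabs] at hi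
      have h1 : (i : ℝ) ≤ 1 / (2 * ε) := by
        rw [le_div_iff₀ (by positivity)] at hi
        rw [le_div_iff₀ (by positivity)]
        nlinarith
      have : (i : ℝ) ≤ (⌈1 / (2 * ε)⌉₊ : ℝ) := h1.trans (Nat.le_ceil _)
      exact_mod_cast this
    exact Set.Finite.subset ((Set.finite_Iic _).preimage
      (Set.injOn_of_injective (fun a b h => by exact PNat.coe_injective h))) this
  set x : C₀(ℕ+, ℝ) := mkC0 f htend with hx
  have hxapp : ∀ i, x i = z i / (2 * (i : ℝ)) := fun i => rfl
  -- bound on membership constraint for base sequence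
  have hdist : ∀ n : ℕ+, infDist x (aSgn (z n) n) ≤ 1 / 2 := by
    intro n
    -- witness y
    set g : ℕ+ → ℝ := fun i => if i = n then z n * ((1 / 2) * (1 + 1 / (n : ℝ))) else f i
      with hg
    have hgtend : Tendsto g cofinite (nhds 0) := by
      refine htend.congr' ?_
      filter_upwards [eventually_cofinite_ne n] with i hi
      simp [hg, hi]
    set y : C₀(ℕ+, ℝ) := mkC0 g hgtend with hy
    have hgn : g n = z n * ((1 / 2) * (1 + 1 / (n : ℝ))) := by simp [hg]
    have hgi : ∀ i, i ≠ n → g i = f i := by intro i hi; simp [hg, hi]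
    have hymem : y ∈ aSgn (z n) n := by
      constructor
      · intro i
        show |g i| ≤ _
        by_cases hin : i = n
        · subst hin
          rw [hgn, abs_mul, habs, one_mul,
            abs_of_nonneg (by have := (hipos i).le; positivity)]
        · rw [hgi i hin, hfabs]
          have h1 : (0:ℝ) < (i:ℝ) := hipos i
          rw [div_le_iff₀ (by positivity)]
          have : (1:ℝ) / (i:ℝ) ≤ 1 + 1 / (i:ℝ) := by linarith [one_div_pos.mpr h1]
          calc (1:ℝ) = (1/2) * (1/(i:ℝ)) * (2 * (i:ℝ)) := by field_simp
            _ ≤ (1/2) * (1 + 1/(i:ℝ)) * (2 * (i:ℝ)) := by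
                apply mul_le_mul_of_nonneg_right _ (by positivity)
                nlinarith [one_div_pos.mpr h1]
      · exact hgn
    have hdxy : dist x y ≤ 1 / 2 := by
      rw [← ZeroAtInftyContinuousMap.dist_toBCF_eq_dist]
      refine (BoundedContinuousFunction.dist_le (by norm_num)).2 fun i => ?_
      show dist (f i) (g i) ≤ 1 / 2
      by_cases hin : i = n
      · subst hin
        rw [hgn, Real.dist_eq]
        show |z i / (2 * (i:ℝ)) - _| ≤ _
        have hn : (0:ℝ) < (i:ℝ) := hipos i
        have : z i / (2 * (i:ℝ)) - z i * ((1/2) * (1 + 1/(i:ℝ))) = -(z i) / 2 := by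
          field_simp; ring
        rw [this, abs_div, abs_neg, habs]
        norm_num
      · rw [hgi i hin, dist_self]; norm_num
    calc infDist x (aSgn (z n) n) ≤ dist x y := infDist_le_dist_of_mem hymem
      _ ≤ 1 / 2 := hdxy
  refine ⟨⟨x, hxapp, hdist⟩, ⟨x, ?_⟩⟩
  simp only [Set.mem_iInter]
  intro n
  exact hdist n
end
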